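/- Let n ≥ 0 and let 0 = a_0 < a_1 < ⋯ < a_n be integers. The number of t = 0 touching-path configurations with endpoints (a_0,…,a_n) equals the ratio of Vandermonde determinants Δ(a_0, a_1+1, a_2+2, …, a_n+n) / Δ(0, 1, 2, …, n) = ∏_{0 ≤ i < j ≤ n} ((a_j + j) − (a_i + i)) / (j − i). -/

import Mathlib

open Finset

namespace TP

variable {m : ℕ}

/-- number of entries of `b` equal to `j` -/
def cnt {m : ℕ} (b : Fin m → ℕ) (j : ℕ) : ℕ := ∑ k : Fin m, if b k = j then 1 else 0

/-- number of entries of `b` less than `j` -/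
def Blt {m : ℕ} (b : Fin m → ℕ) (j : ℕ) : ℕ := ∑ k : Fin m, if b k < j then 1 else 0

/-- partial sums -/
def PS (f : ℕ → ℕ) (j : ℕ) : ℕ := ∑ j' ∈ Finset.range j, f j'

lemma PS_zero (f : ℕ → ℕ) : PS f 0 = 0 := rfl

lemma PS_succ (f : ℕ → ℕ) (j : ℕ) : PS f (j+1) = PS f j + f j := Finset.sum_range_succ f j

lemma PS_mono (f : ℕ → ℕ) : Monotone (PS f) := fun _ _ hij =>
  Finset.sum_le_sum_of_subset (Finset.range_subset_range.2 hij)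

lemma PS_stable (f : ℕ → ℕ) (t j : ℕ) (hf : ∀ x, t ≤ x → f x = 0) (hj : t ≤ j) :
    PS f j = PS f t := by
  rw [PS, PS]
  exact (Finset.sum_subset (Finset.range_subset_range.2 hj)
    (fun x _ hx => hf x (by simp only [Finset.mem_range, not_lt] at hx; omega))).symm

lemma Blt_zero (b : Fin m → ℕ) : Blt b 0 = 0 := by simp [Blt]

lemma Blt_succ (b : Fin m → ℕ) (j : ℕ) : Blt b (j+1) = Blt b j + cnt b j := by
  rw [Blt, Blt, cnt, ← Finset.sum_add_distrib]
  exact Finset.sum_congr rfl fun k _ => by split_ifs <;> omega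

lemma PS_cnt (b : Fin m → ℕ) (j : ℕ) : PS (cnt b) j = Blt b j := by
  induction j with
  | zero => rw [PS_zero, Blt_zero]
  | succ j ih => rw [PS_succ, Blt_succ, ih]

lemma Blt_all (b : Fin m → ℕ) (j : ℕ) (hb : ∀ k, b k < j) : Blt b j = m := by
  rw [Blt, Finset.sum_congr rfl fun k _ => if_pos (hb k)]
  simp

lemma cnt_zero (b : Fin m → ℕ) (j : ℕ) (hb : ∀ k, b k < j) : cnt b j = 0 := by
  rw [cnt]
  exact Finset.sum_eq_zero fun k _ => if_neg (by have := hb k; omega)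

lemma count_Ico (M s t : ℕ) (htM : t ≤ M) :
    (∑ k : Fin M, if s ≤ (k : ℕ) ∧ (k : ℕ) < t then 1 else 0) = t - s := by
  rw [Fin.sum_univ_eq_sum_range (fun k => if s ≤ k ∧ k < t then (1:ℕ) else 0) M]
  rw [← Finset.sum_filter]
  have : (Finset.range M).filter (fun k => s ≤ k ∧ k < t) = Finset.Ico s t := by
    ext k; simp only [Finset.mem_filter, Finset.mem_range, Finset.mem_Ico]; omega
  rw [this]
  simp [Nat.card_Ico]

lemma cnt_injective (a : Fin m → ℕ) (ha : Function.Injective a) (j : ℕ) :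
    cnt a j = if ∃ i, a i = j then 1 else 0 := by
  rw [cnt]
  by_cases hex : ∃ i, a i = j
  · obtain ⟨i0, hi0⟩ := hex
    rw [if_pos ⟨i0, hi0⟩]
    have : ∀ k : Fin m, (if a k = j then (1:ℕ) else 0) = if k = i0 then 1 else 0 := by
      intro k
      congr 1
      apply propext
      constructor
      · intro h; exact ha (h.trans hi0.symm)
      · intro h; rw [h]; exact hi0
    rw [Finset.sum_congr rfl fun k _ => this k]
    simp
  · rw [if_neg hex]
    exact Finset.sum_eq_zero fun k _ => if_neg (fun h => hex ⟨k, h⟩)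

/-- selection: the `i`-th smallest element (with multiplicity) of the multiset with
multiplicity function `μ` supported in `[0, W]`. -/
def sel (W : ℕ) (μ : ℕ → ℕ) (i : ℕ) : ℕ :=
  ((Finset.range (W+1)).filter (fun j => PS μ (j+1) ≤ i)).card

lemma filter_downward {N : ℕ} (q : ℕ → Prop) [DecidablePred q]
    (hq : ∀ j1 j2, j1 ≤ j2 → q j2 → q j1) :
    (Finset.range N).filter q = Finset.range (((Finset.range N).filter q).card) := by
  ext j
  simp only [Finset.mem_filter, Finset.mem_range]
  constructor
  · rintro ⟨hjN, hqj⟩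
    have hsub : Finset.range (j+1) ⊆ (Finset.range N).filter q := by
      intro x hx
      simp only [Finset.mem_range] at hx
      exact Finset.mem_filter.2 ⟨Finset.mem_range.2 (by omega), hq x j (by omega) hqj⟩
    have := Finset.card_le_card hsub
    simp only [Finset.card_range] at this
    omega
  · intro hj
    by_contra hcon
    by_cases hjN : j < N
    · have hqj : ¬ q j := fun h => hcon ⟨hjN, h⟩
      have hsub : (Finset.range N).filter q ⊆ Finset.range j := by
        intro x hx
        simp only [Finset.mem_filter, Finset.mem_range] at hx
        simp only [Finset.mem_range]
        by_contra hxj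
        exact hqj (hq j x (by omega) hx.2)
      have := Finset.card_le_card hsub
      simp only [Finset.card_range] at this
      omega
    · have := Finset.card_le_card (Finset.filter_subset q (Finset.range N))
      simp only [Finset.card_range] at this
      omega

lemma sel_spec (W : ℕ) (μ : ℕ → ℕ) (i : ℕ) (hi : i < PS μ (W+1)) :
    PS μ (sel W μ i) ≤ i ∧ i < PS μ (sel W μ i + 1) ∧ sel W μ i ≤ W := by
  have hdc : ∀ j1 j2, j1 ≤ j2 → PS μ (j2+1) ≤ i → PS μ (j1+1) ≤ i := by
    intro j1 j2 h hq
    exact le_trans (PS_mono μ (by omega)) hq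
  have hflt := filter_downward (fun j => PS μ (j+1) ≤ i) hdc (N := W+1)
  set k := sel W μ i with hk
  have hkcard : ((Finset.range (W+1)).filter (fun j => PS μ (j+1) ≤ i)).card = k := rfl
  rw [hkcard] at hflt
  have hkW : k ≤ W := by
    by_contra hcon
    have hW1 : k ≤ W + 1 := by
      have := Finset.card_le_card (Finset.filter_subset (fun j => PS μ (j+1) ≤ i) (Finset.range (W+1)))
      simp only [Finset.card_range] at this; exact this
    have hkeq : k = W + 1 := by omega
    have : W ∈ (Finset.range (W+1)).filter (fun j => PS μ (j+1) ≤ i) := by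
      rw [hflt, hkeq]; simp
    simp only [Finset.mem_filter] at this
    omega
  refine ⟨?_, ?_, hkW⟩
  · rcases Nat.eq_zero_or_pos k with h0 | hpos
    · rw [h0, PS_zero]; omega
    · have : k - 1 ∈ (Finset.range (W+1)).filter (fun j => PS μ (j+1) ≤ i) := by
        rw [hflt]; simp only [Finset.mem_range]; omega
      simp only [Finset.mem_filter] at this
      have : PS μ (k - 1 + 1) ≤ i := this.2
      have heq : k - 1 + 1 = k := by omega
      rwa [heq] at this
  · have : k ∉ (Finset.range (W+1)).filter (fun j => PS μ (j+1) ≤ i) := by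
      rw [hflt]; simp
    simp only [Finset.mem_filter, Finset.mem_range, not_and] at this
    have := this (by omega)
    omega

lemma sel_eq (W : ℕ) (μ : ℕ → ℕ) (i j : ℕ) (hj : j ≤ W)
    (h1 : PS μ j ≤ i) (h2 : i < PS μ (j+1)) : sel W μ i = j := by
  have hi : i < PS μ (W+1) := lt_of_lt_of_le h2 (PS_mono μ (by omega))
  obtain ⟨s1, s2, _⟩ := sel_spec W μ i hi
  rcases lt_trichotomy (sel W μ i) j with h | h | h
  · have : PS μ (sel W μ i + 1) ≤ PS μ j := PS_mono μ (by omega)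
    omega
  · exact h
  · have : PS μ (j+1) ≤ PS μ (sel W μ i) := PS_mono μ (by omega)
    omega

lemma cnt_sel (m W : ℕ) (μ : ℕ → ℕ) (htot : PS μ (W+1) = m+1)
    (hsupp : ∀ j, W < j → μ j = 0) (j : ℕ) :
    cnt (fun i : Fin (m+1) => sel W μ (i : ℕ)) j = μ j := by
  by_cases hj : j ≤ W
  · have hiff : ∀ k : Fin (m+1), sel W μ (k : ℕ) = j ↔ (PS μ j ≤ (k:ℕ) ∧ (k:ℕ) < PS μ (j+1)) := by
      intro k
      constructor
      · intro h
        obtain ⟨s1, s2, _⟩ := sel_spec W μ (k : ℕ) (by omega)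
        rw [h] at s1 s2
        exact ⟨s1, s2⟩
      · rintro ⟨h1, h2⟩
        exact sel_eq W μ _ j hj h1 h2
    rw [cnt]
    rw [Finset.sum_congr rfl fun k _ => by rw [if_congr (hiff k) rfl rfl]]
    rw [count_Ico (m+1) (PS μ j) (PS μ (j+1)) (by rw [← htot]; exact PS_mono μ (by omega))]
    rw [PS_succ]; omega
  · rw [cnt_zero, hsupp j (by omega)]
    intro k
    obtain ⟨_, _, s3⟩ := sel_spec W μ (k : ℕ) (by omega)
    omega

lemma sel_cnt {m : ℕ} (W : ℕ) (b : Fin (m+1) → ℕ) (hb : Monotone b)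
    (hbW : ∀ i, b i ≤ W) (i : Fin (m+1)) :
    sel W (cnt b) (i : ℕ) = b i := by
  apply sel_eq W (cnt b) _ (b i) (hbW i)
  · rw [PS_cnt, Blt]
    calc (∑ k : Fin (m+1), if b k < b i then 1 else 0)
        ≤ ∑ k : Fin (m+1), if 0 ≤ (k:ℕ) ∧ (k:ℕ) < (i:ℕ) then 1 else 0 := by
          apply Finset.sum_le_sum
          intro k _
          split_ifs with h1 h2
          · rfl
          · exfalso
            apply h2
            refine ⟨Nat.zero_le _, ?_⟩
            by_contra hki
            have : i ≤ k := by omega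
            have := hb this
            omega
          · omega
          · rfl
      _ = (i:ℕ) := by rw [count_Ico (m+1) 0 (i:ℕ) (by omega)]; omega
  · rw [PS_cnt, Blt]
    calc (i:ℕ) < (i:ℕ) + 1 := by omega
      _ = ∑ k : Fin (m+1), if 0 ≤ (k:ℕ) ∧ (k:ℕ) < (i:ℕ)+1 then 1 else 0 := by
          rw [count_Ico (m+1) 0 ((i:ℕ)+1) (by omega)]; omega
      _ ≤ ∑ k : Fin (m+1), if b k < b i + 1 then 1 else 0 := by
          apply Finset.sum_le_sum
          intro k _
          split_ifs with h1 h2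
          · rfl
          · exfalso
            apply h2
            have : k ≤ i := by omega
            have := hb this
            omega
          · omega
          · rfl






/-- number of Gelfand–Tsetlin patterns with top row `a` -/
def GT : (m : ℕ) → (Fin (m + 1) → ℕ) → ℕ
  | 0, _ => 1
  | m+1, a => ∑ b ∈ Fintype.piFinset (fun i : Fin (m + 1) =>
      Finset.Icc (a i.castSucc) (a i.succ)), GT m b

/-- the Vandermonde ratio -/
def Dq (m : ℕ) (a : Fin (m + 1) → ℕ) : ℚ :=
  (∏ p ∈ Finset.univ.filter (fun p : Fin (m + 1) × Fin (m + 1) => p.1 < p.2),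
      (((a p.2 : ℚ) + (p.2 : ℕ)) - ((a p.1 : ℚ) + (p.1 : ℕ)))) /
  (∏ p ∈ Finset.univ.filter (fun p : Fin (m + 1) × Fin (m + 1) => p.1 < p.2),
      (((p.2 : ℕ) : ℚ) - ((p.1 : ℕ) : ℚ)))

lemma prod_pairs (k : ℕ) (f : Fin k × Fin k → ℚ) :
    ∏ p ∈ Finset.univ.filter (fun p : Fin k × Fin k => p.1 < p.2), f p =
      ∏ i : Fin k, ∏ j ∈ Finset.Ioi i, f (i, j) := by
  rw [← Finset.prod_sigma (Finset.univ : Finset (Fin k)) (fun i => Finset.Ioi i)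
    (fun p => f (p.1, p.2))]
  refine Finset.prod_nbij' (fun p : Fin k × Fin k => (⟨p.1, p.2⟩ : Σ _ : Fin k, Fin k))
    (fun p => (p.1, p.2)) ?_ ?_ ?_ ?_ ?_
  · intro p hp
    simp only [Finset.mem_filter, Finset.mem_univ, true_and] at hp
    simp only [Finset.mem_sigma, Finset.mem_univ, Finset.mem_Ioi, true_and]
    exact hp
  · intro p hp
    simp only [Finset.mem_sigma, Finset.mem_Ioi] at hp
    simp only [Finset.mem_filter, Finset.mem_univ, true_and]
    exact hp.2
  · intro p _; rfl
  · intro p _; rfl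
  · intro p _; rfl

/-- Dq as a determinant of binomial coefficients -/
lemma Dq_eq_det (k : ℕ) (x : Fin (k + 1) → ℕ) :
    Dq k x = Matrix.det (Matrix.of fun i j : Fin (k + 1) =>
      (((x i + (i : ℕ)).choose (j : ℕ) : ℕ) : ℚ)) := by
  have key : ∀ y : Fin (k+1) → ℕ,
      (∏ j : Fin (k+1), ((j : ℕ).factorial : ℚ)) *
        Matrix.det (Matrix.of fun i j : Fin (k+1) => (((y i).choose (j : ℕ) : ℕ) : ℚ)) =
      ∏ p ∈ Finset.univ.filter (fun p : Fin (k+1) × Fin (k+1) => p.1 < p.2),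
        (((y p.2 : ℚ)) - ((y p.1 : ℚ))) := by
    intro y
    have h1 : Matrix.det (Matrix.of fun i j : Fin (k+1) =>
        (((j:ℕ).factorial : ℚ)) * (((y i).choose (j : ℕ) : ℕ) : ℚ)) =
        (∏ j : Fin (k+1), ((j : ℕ).factorial : ℚ)) *
        Matrix.det (Matrix.of fun i j : Fin (k+1) => (((y i).choose (j : ℕ) : ℕ) : ℚ)) :=
      Matrix.det_mul_row _ _
    have h2 : ∀ i j : Fin (k+1), (((j:ℕ).factorial : ℚ)) * (((y i).choose (j : ℕ) : ℕ) : ℚ)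
        = (descPochhammer ℚ (j : ℕ)).eval ((y i : ℕ) : ℚ) := by
      intro i j
      rw [descPochhammer_eval_eq_descFactorial ℚ (y i) (j : ℕ)]
      rw [Nat.descFactorial_eq_factorial_mul_choose]
      push_cast
      ring
    have h3 : Matrix.det (Matrix.of fun i j : Fin (k+1) =>
        (((j:ℕ).factorial : ℚ)) * (((y i).choose (j : ℕ) : ℕ) : ℚ)) =
        (Matrix.vandermonde (fun i : Fin (k+1) => ((y i : ℕ) : ℚ))).det := by
      rw [Matrix.det_eval_matrixOfPolynomials_eq_det_vandermonde
        (fun i : Fin (k+1) => ((y i : ℕ) : ℚ)) (fun j => descPochhammer ℚ (j : ℕ))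
        (fun i => descPochhammer_natDegree ℚ (i : ℕ)) (fun i => monic_descPochhammer ℚ (i : ℕ))]
      congr 1
      ext i j
      simp only [Matrix.of_apply]
      rw [h2 i j]
    rw [← h1, h3, Matrix.det_vandermonde, prod_pairs]
  have num := key (fun i => x i + (i : ℕ))
  have den := key (fun i : Fin (k+1) => (i : ℕ))
  -- denominator: the matrix is lower triangular with 1s
  have dtri : Matrix.det (Matrix.of fun i j : Fin (k+1) =>
      ((((i : ℕ)).choose (j : ℕ) : ℕ) : ℚ)) = 1 := by
    rw [Matrix.det_of_lowerTriangular _ ?htri]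
    · apply Finset.prod_eq_one
      intro i _
      simp [Nat.choose_self]
    · intro i j hij
      simp only [Matrix.of_apply]
      rw [Nat.choose_eq_zero_of_lt]
      · simp
      · exact hij
  rw [dtri, mul_one] at den
  have hF : (∏ j : Fin (k+1), ((j : ℕ).factorial : ℚ)) ≠ 0 := by
    apply Finset.prod_ne_zero_iff.2
    intro j _
    exact_mod_cast (Nat.factorial_ne_zero (j : ℕ))
  rw [Dq]
  have hnum : (∏ p ∈ Finset.univ.filter (fun p : Fin (k + 1) × Fin (k + 1) => p.1 < p.2),
      (((x p.2 : ℚ) + (p.2 : ℕ)) - ((x p.1 : ℚ) + (p.1 : ℕ)))) =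
      (∏ j : Fin (k+1), ((j : ℕ).factorial : ℚ)) *
        Matrix.det (Matrix.of fun i j : Fin (k+1) => (((x i + (i:ℕ)).choose (j : ℕ) : ℕ) : ℚ)) := by
    rw [num]
    apply Finset.prod_congr rfl
    intro p _
    push_cast
    ring
  have hden : (∏ p ∈ Finset.univ.filter (fun p : Fin (k + 1) × Fin (k + 1) => p.1 < p.2),
      (((p.2 : ℕ) : ℚ) - ((p.1 : ℕ) : ℚ))) = (∏ j : Fin (k+1), ((j : ℕ).factorial : ℚ)) := by
    rw [← den]
  rw [hnum, hden, mul_comm, mul_div_assoc, div_self hF, mul_one]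

lemma hockey (s u jj : ℕ) (hsu : s ≤ u + 1) :
    ∑ t ∈ Finset.Icc s u, ((t.choose jj : ℕ) : ℚ) =
      (((u+1).choose (jj+1) : ℕ) : ℚ) - ((s.choose (jj+1) : ℕ) : ℚ) := by
  have hrange : ∀ N : ℕ, ∑ t ∈ Finset.range N, ((t.choose jj : ℕ) : ℚ) =
      ((N.choose (jj+1) : ℕ) : ℚ) := by
    intro N
    induction N with
    | zero => simp [Nat.choose_eq_zero_of_lt]
    | succ N ih =>
      rw [Finset.sum_range_succ, ih]
      rw [Nat.choose_succ_succ' N jj]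
      push_cast
      ring
  have : Finset.Icc s u = Finset.Ico s (u+1) := rfl
  rw [this, Finset.sum_Ico_eq_sub _ hsu, hrange, hrange]

lemma box_mono {m : ℕ} (a : Fin (m + 2) → ℕ) (ha : Monotone a) (b : Fin (m + 1) → ℕ)
    (hb : b ∈ Fintype.piFinset (fun i : Fin (m + 1) => Finset.Icc (a i.castSucc) (a i.succ))) :
    Monotone b ∧ ∀ i, a i.castSucc ≤ b i ∧ b i ≤ a i.succ := by
  have hbi : ∀ i, a i.castSucc ≤ b i ∧ b i ≤ a i.succ := by
    intro i
    have := (Fintype.mem_piFinset.1 hb) i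
    rwa [Finset.mem_Icc] at this
  refine ⟨?_, hbi⟩
  intro i i' hle
  rcases eq_or_lt_of_le hle with h | h
  · rw [h]
  · calc b i ≤ a i.succ := (hbi i).2
      _ ≤ a i'.castSucc := ha (by
          rw [Fin.le_def]
          simp only [Fin.val_succ, Fin.coe_castSucc]
          exact h)
      _ ≤ b i' := (hbi i').1

lemma GT_eq : ∀ (m : ℕ) (a : Fin (m + 1) → ℕ), Monotone a → (GT m a : ℚ) = Dq m a := by
  intro m
  induction m with
  | zero =>
    intro a _
    have : Finset.univ.filter (fun p : Fin 1 × Fin 1 => p.1 < p.2) = ∅ := by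
      apply Finset.filter_eq_empty_iff.2
      intro p _
      have h1 : p.1 = 0 := Subsingleton.elim _ _
      have h2 : p.2 = 0 := Subsingleton.elim _ _
      rw [h1, h2]
      exact lt_irrefl 0
    rw [GT, Dq, this]
    simp
  | succ m ih =>
    intro a ha
    have step1 : (GT (m+1) a : ℚ) =
        ∑ b ∈ Fintype.piFinset (fun i : Fin (m + 1) =>
          Finset.Icc (a i.castSucc) (a i.succ)),
          Matrix.det (Matrix.of fun i j : Fin (m + 1) =>
            (((b i + (i : ℕ)).choose (j : ℕ) : ℕ) : ℚ)) := by
      rw [GT]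
      push_cast
      apply Finset.sum_congr rfl
      intro b hb
      rw [ih b (box_mono a ha b hb).1, Dq_eq_det]
    have step2 : ∑ b ∈ Fintype.piFinset (fun i : Fin (m + 1) =>
          Finset.Icc (a i.castSucc) (a i.succ)),
          Matrix.det (Matrix.of fun i j : Fin (m + 1) =>
            (((b i + (i : ℕ)).choose (j : ℕ) : ℕ) : ℚ)) =
        Matrix.det (Matrix.of fun i j : Fin (m + 1) =>
          ∑ t ∈ Finset.Icc (a i.castSucc) (a i.succ),
            (((t + (i : ℕ)).choose (j : ℕ) : ℕ) : ℚ)) := by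
      have h := (Matrix.detRowAlternating (R := ℚ) (n := Fin (m + 1))).toMultilinearMap.map_sum_finset
        (fun (i : Fin (m+1)) (t : ℕ) =>
          (fun j : Fin (m+1) => (((t + (i : ℕ)).choose (j : ℕ) : ℕ) : ℚ)))
        (fun i : Fin (m+1) => Finset.Icc (a i.castSucc) (a i.succ))
      rw [show (fun i : Fin (m+1) => ∑ t ∈ Finset.Icc (a i.castSucc) (a i.succ),
          (fun j : Fin (m+1) => (((t + (i : ℕ)).choose ((j : ℕ)) : ℕ) : ℚ))) =
          (fun (i : Fin (m+1)) (j : Fin (m+1)) => ∑ t ∈ Finset.Icc (a i.castSucc) (a i.succ),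
          (((t + (i : ℕ)).choose ((j : ℕ)) : ℕ) : ℚ))
          from funext fun i => funext fun j => Finset.sum_apply _ _ _] at h
      exact h.symm
    have hentry : ∀ i j : Fin (m+1),
        (∑ t ∈ Finset.Icc (a i.castSucc) (a i.succ), (((t + (i : ℕ)).choose (j : ℕ) : ℕ) : ℚ)) =
        (((a i.succ + (i : ℕ) + 1).choose ((j : ℕ)+1) : ℕ) : ℚ) -
          (((a i.castSucc + (i : ℕ)).choose ((j : ℕ)+1) : ℕ) : ℚ) := by
      intro i j
      have hshift : (∑ t ∈ Finset.Icc (a i.castSucc) (a i.succ),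
          (((t + (i : ℕ)).choose (j : ℕ) : ℕ) : ℚ)) =
          ∑ y ∈ Finset.Icc (a i.castSucc + (i : ℕ)) (a i.succ + (i : ℕ)),
          ((y.choose (j : ℕ) : ℕ) : ℚ) := by
        rw [← Finset.map_add_right_Icc (a i.castSucc) (a i.succ) (i : ℕ), Finset.sum_map]
        rfl
      rw [hshift, hockey _ _ _ (by
        have : a i.castSucc ≤ a i.succ := ha (Fin.castSucc_le_succ i)
        omega)]
    -- the big (m+2)-matrix and its telescoped version
    set N : Matrix (Fin (m+2)) (Fin (m+2)) ℚ :=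
      Matrix.of fun i j => (((a i + (i : ℕ)).choose (j : ℕ) : ℕ) : ℚ) with hN
    set P : Matrix (Fin (m+2)) (Fin (m+2)) ℚ := Matrix.of fun i j =>
      Fin.cases (N 0 j) (fun i' => N i'.succ j - N i'.castSucc j) i with hP
    have hNP : N.det = P.det := by
      apply Matrix.det_eq_of_forall_row_eq_smul_add_pred (fun _ => 1)
      · intro j
        simp [hP]
      · intro i j
        simp only [hP, Matrix.of_apply, Fin.cases_succ]
        ring
    have hPsub : P.det = (P.submatrix Fin.succ Fin.succ).det := by
      rw [Matrix.det_succ_column_zero, Fin.sum_univ_succ]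
      have h00 : P 0 0 = 1 := by
        simp [hP, hN]
      have hsucc0 : ∀ i : Fin (m+1), P i.succ 0 = 0 := by
        intro i
        simp [hP, hN]
      rw [h00]
      have hrest : ∑ i : Fin (m+1), (-1 : ℚ) ^ ((i.succ : Fin (m+2)) : ℕ) * P i.succ 0 *
          (P.submatrix i.succ.succAbove Fin.succ).det = 0 := by
        apply Finset.sum_eq_zero
        intro i _
        rw [hsucc0 i]
        ring
      rw [hrest]
      have : (Fin.succAbove (0 : Fin (m+2))) = Fin.succ := funext fun i => Fin.zero_succAbove i
      rw [this]
      simp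
    have hsubentry : P.submatrix Fin.succ Fin.succ =
        Matrix.of (fun i j : Fin (m+1) =>
        (((a i.succ + (i : ℕ) + 1).choose ((j : ℕ)+1) : ℕ) : ℚ) -
          (((a i.castSucc + (i : ℕ)).choose ((j : ℕ)+1) : ℕ) : ℚ)) := by
      ext i j
      simp only [Matrix.submatrix_apply, hP, Matrix.of_apply, Fin.cases_succ, hN]
      congr 2
    have hfinal : Dq (m+1) a = N.det := Dq_eq_det (m+1) a
    rw [step1, step2, hfinal, hNP, hPsub, hsubentry]
    congr 1
    ext i j
    simp only [Matrix.of_apply]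
    exact hentry i j




/-- ℕ-indexed touching-path configuration with endpoints `b`, grid width `W`,
with all out-of-range values normalized to zero. -/
def Gen (m W : ℕ) (b : Fin (m + 1) → ℕ) (h v : ℕ → ℕ → ℕ) : Prop :=
  (∀ r ≤ m, ∀ j ≤ W, h r j + v r j = h r (j+1) + v (r+1) j) ∧
  (∀ r j, h r j ≤ 1) ∧
  (∀ r ≤ m, h r 0 = 1) ∧
  (∀ r ≤ m, h r (W+1) = 0) ∧
  (∀ j, v 0 j = 0) ∧
  (∀ j, v (m+1) j = cnt b j) ∧
  (∀ r j, m < r → h r j = 0) ∧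
  (∀ r j, W + 1 < j → h r j = 0) ∧
  (∀ r j, m + 1 < r → v r j = 0) ∧
  (∀ r j, W < j → v r j = 0)

variable {m W : ℕ} {b : Fin (m + 1) → ℕ} {h v : ℕ → ℕ → ℕ}

/-- partial-sum form of conservation along a row -/
lemma Gen.rowsum (hg : Gen m W b h v) :
    ∀ r ≤ m, ∀ j ≤ W + 1, h r j + PS (v (r+1)) j = 1 + PS (v r) j := by
  intro r hr j hj
  induction j with
  | zero => rw [PS_zero, PS_zero, hg.2.2.1 r hr]
  | succ j ih =>
    have hj' : j ≤ W := by omega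
    have hc := hg.1 r hr j hj'
    have hi := ih (by omega)
    rw [PS_succ, PS_succ]
    omega

/-- `v` is unique given `h` -/
lemma Gen.v_unique {v' : ℕ → ℕ → ℕ} (hg : Gen m W b h v) (hg' : Gen m W b h v') : v = v' := by
  have key : ∀ r j, v r j = v' r j := by
    intro r
    induction r with
    | zero => intro j; rw [hg.2.2.2.2.1, hg'.2.2.2.2.1]
    | succ r ih =>
      intro j
      by_cases hj : j ≤ W
      · by_cases hr : r ≤ m
        · have e1 := hg.1 r hr j hj
          have e2 := hg'.1 r hr j hj
          have := ih j
          omega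
        · rw [hg.2.2.2.2.2.2.2.2.1 (r+1) j (by omega),
            hg'.2.2.2.2.2.2.2.2.1 (r+1) j (by omega)]
      · rw [hg.2.2.2.2.2.2.2.2.2 (r+1) j (by omega),
          hg'.2.2.2.2.2.2.2.2.2 (r+1) j (by omega)]
  funext r j; exact key r j

instance gen_finite : Finite {c : (ℕ → ℕ → ℕ) × (ℕ → ℕ → ℕ) // Gen m W b c.1 c.2} := by
  apply Finite.of_injective (fun c => (fun (r : Fin (m+1)) (j : Fin (W+2)) =>
    (⟨c.val.1 (r : ℕ) (j : ℕ), by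
      have := c.property.2.1 (r : ℕ) (j : ℕ); omega⟩ : Fin 2)))
  intro c c' hcc
  have hh : c.val.1 = c'.val.1 := by
    funext r j
    by_cases hr : r ≤ m
    · by_cases hj : j ≤ W + 1
      · have := congrFun (congrFun hcc ⟨r, by omega⟩) ⟨j, by omega⟩
        simpa using this
      · rw [c.property.2.2.2.2.2.2.2.1 r j (by omega),
          c'.property.2.2.2.2.2.2.2.1 r j (by omega)]
    · rw [c.property.2.2.2.2.2.2.1 r j (by omega),
        c'.property.2.2.2.2.2.2.1 r j (by omega)]
  apply Subtype.ext
  have hg' := c'.property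
  rw [← hh] at hg'
  have := Gen.v_unique c.property hg'
  exact Prod.ext hh this

/-- base case: a unique configuration -/
lemma gen_card_zero (W : ℕ) (b : Fin 1 → ℕ) (hbW : b 0 ≤ W) :
    Nat.card {c : (ℕ → ℕ → ℕ) × (ℕ → ℕ → ℕ) // Gen 0 W b c.1 c.2} = 1 := by
  rw [Nat.card_eq_one_iff_unique]
  constructor
  · constructor
    intro c c'
    apply Subtype.ext
    have hv : c.val.2 = c'.val.2 := by
      funext r j
      match r with
      | 0 => rw [c.property.2.2.2.2.1, c'.property.2.2.2.2.1]
      | 1 => rw [c.property.2.2.2.2.2.1, c'.property.2.2.2.2.2.1]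
      | (r+2) => rw [c.property.2.2.2.2.2.2.2.2.1 (r+2) j (by omega),
          c'.property.2.2.2.2.2.2.2.2.1 (r+2) j (by omega)]
    have hh : c.val.1 = c'.val.1 := by
      funext r j
      by_cases hr : r ≤ 0
      · by_cases hj : j ≤ W + 1
        · have e1 := c.property.rowsum r hr j hj
          have e2 := c'.property.rowsum r hr j hj
          rw [hv] at e1
          omega
        · rw [c.property.2.2.2.2.2.2.2.1 r j (by omega),
            c'.property.2.2.2.2.2.2.2.1 r j (by omega)]
      · rw [c.property.2.2.2.2.2.2.1 r j (by omega),
          c'.property.2.2.2.2.2.2.1 r j (by omega)]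
    exact Prod.ext hh hv
  · refine ⟨⟨(fun r j => if r = 0 ∧ j ≤ b 0 then 1 else 0,
      fun r j => if r = 1 ∧ b 0 = j then 1 else 0), ?_, ?_, ?_, ?_, ?_, ?_, ?_, ?_, ?_, ?_⟩⟩
    · intro r hr j hj
      have hr0 : r = 0 := by omega
      subst hr0
      dsimp only
      simp only [eq_self_iff_true, true_and, show ((0:ℕ) = 1) = False by simp, false_and,
        if_false, Nat.zero_add]
      split_ifs <;> omega
    · intro r j; dsimp only; split_ifs <;> omega
    · intro r hr
      have hr0 : r = 0 := by omega
      subst hr0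
      dsimp only
      rw [if_pos ⟨rfl, by omega⟩]
    · intro r hr
      dsimp only
      rw [if_neg (by omega)]
    · intro j
      dsimp only
      rw [if_neg (by omega)]
    · intro j
      dsimp only
      have : cnt b j = if b 0 = j then 1 else 0 := by
        rw [cnt, Fin.sum_univ_one]
      rw [this]
      simp
    · intro r j hr; dsimp only; rw [if_neg (by omega)]
    · intro r j hj; dsimp only; rw [if_neg (by omega)]
    · intro r j hr; dsimp only; rw [if_neg (by omega)]
    · intro r j hj
      dsimp only
      rw [if_neg ?_]
      rintro ⟨h1, h2⟩
      omega




section Step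

variable {m W : ℕ} {a : Fin (m + 2) → ℕ}

lemma a_le_W (ha : Monotone a) (haW : a (Fin.last (m + 1)) ≤ W) : ∀ i, a i ≤ W :=
  fun i => le_trans (ha (Fin.le_last i)) haW

/-- the top-row horizontal multiplicities determined by endpoints `a` below `b` -/
def Hrow (a : Fin (m + 2) → ℕ) (b : Fin (m + 1) → ℕ) (j : ℕ) : ℕ :=
  (1 + Blt b j) - Blt a j

lemma interlace_blt {b : Fin (m + 1) → ℕ}
    (hip : ∀ i, a i.castSucc ≤ b i ∧ b i ≤ a i.succ) (j : ℕ) :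
    Blt b j ≤ Blt a j ∧ Blt a j ≤ 1 + Blt b j := by
  constructor
  · rw [Blt, Blt, Fin.sum_univ_castSucc (fun k : Fin (m+2) => if a k < j then 1 else 0)]
    have : (∑ k : Fin (m+1), if b k < j then 1 else 0) ≤
        ∑ k : Fin (m+1), if a k.castSucc < j then 1 else 0 := by
      apply Finset.sum_le_sum
      intro k _
      have := (hip k).1
      split_ifs <;> omega
    omega
  · rw [Blt, Blt, Fin.sum_univ_succ (fun k : Fin (m+2) => if a k < j then 1 else 0)]
    have : (∑ k : Fin (m+1), if a k.succ < j then 1 else 0) ≤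
        ∑ k : Fin (m+1), if b k < j then 1 else 0 := by
      apply Finset.sum_le_sum
      intro k _
      have := (hip k).2
      split_ifs <;> omega
    have h0 : (if a 0 < j then (1:ℕ) else 0) ≤ 1 := by split_ifs <;> omega
    omega

variable {h v : ℕ → ℕ → ℕ}

lemma top_facts (ha : Monotone a) (haW : a (Fin.last (m + 1)) ≤ W)
    (hg : Gen (m+1) W a h v) :
    (∀ j ≤ W + 1, h (m+1) j + Blt a j = 1 + PS (v (m+1)) j) ∧
    PS (v (m+1)) (W+1) = m+1 := by
  have hps : ∀ j, PS (v (m+1+1)) j = Blt a j := by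
    intro j
    have hfun : v (m+1+1) = cnt a := funext hg.2.2.2.2.2.1
    rw [hfun, PS_cnt]
  have htop : ∀ j ≤ W + 1, h (m+1) j + Blt a j = 1 + PS (v (m+1)) j := by
    intro j hj
    have := hg.rowsum (m+1) le_rfl j hj
    rw [hps j] at this
    omega
  refine ⟨htop, ?_⟩
  have hW1 := htop (W+1) le_rfl
  have heast : h (m+1) (W+1) = 0 := hg.2.2.2.1 (m+1) le_rfl
  have hblt : Blt a (W+1) = m+2 := Blt_all a (W+1) (fun k => by
    have := a_le_W ha haW k; omega)
  omega

lemma fwd_box (ha : Monotone a) (haW : a (Fin.last (m + 1)) ≤ W)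
    (hg : Gen (m+1) W a h v) :
    (fun i : Fin (m+1) => sel W (v (m+1)) (i : ℕ)) ∈
      Fintype.piFinset (fun i : Fin (m + 1) => Finset.Icc (a i.castSucc) (a i.succ)) := by
  obtain ⟨htop, htot⟩ := top_facts ha haW hg
  have key1 : ∀ j ≤ W + 1, PS (v (m+1)) j ≤ Blt a j ∧ Blt a j ≤ 1 + PS (v (m+1)) j := by
    intro j hj
    have := htop j hj
    have := hg.2.1 (m+1) j
    omega
  rw [Fintype.mem_piFinset]
  intro i
  rw [Finset.mem_Icc]
  have hiv : (i : ℕ) < PS (v (m+1)) (W+1) := by rw [htot]; omega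
  obtain ⟨s1, s2, s3⟩ := sel_spec W (v (m+1)) (i : ℕ) hiv
  constructor
  · by_contra hcon
    push_neg at hcon
    set j0 := sel W (v (m+1)) (i : ℕ) + 1 with hj0
    have hj0le : j0 ≤ a i.castSucc := by omega
    have hj0W : j0 ≤ W + 1 := by
      have := a_le_W ha haW i.castSucc; omega
    have hBle : Blt a j0 ≤ (i : ℕ) := by
      have hpt : ∀ k : Fin (m+2), (if a k < j0 then (1:ℕ) else 0) ≤
          if 0 ≤ (k : ℕ) ∧ (k : ℕ) < (i : ℕ) then 1 else 0 := by
        intro k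
        split_ifs with h1 h2
        · rfl
        · exfalso
          apply h2
          refine ⟨Nat.zero_le _, ?_⟩
          by_contra hki
          have hle : i.castSucc ≤ k := by
            rw [Fin.le_def]; simp only [Fin.coe_castSucc]; omega
          have := ha hle
          omega
        · omega
        · rfl
      calc Blt a j0 ≤ ∑ k : Fin (m+2), if 0 ≤ (k : ℕ) ∧ (k : ℕ) < (i : ℕ) then 1 else 0 :=
            Finset.sum_le_sum (fun k _ => hpt k)
        _ = (i : ℕ) := by rw [count_Ico (m+2) 0 (i : ℕ) (by omega)]; omega
    have := (key1 j0 hj0W).1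
    omega
  · by_contra hcon
    push_neg at hcon
    set j0 := a i.succ + 1 with hj0
    have hj0le : j0 ≤ sel W (v (m+1)) (i : ℕ) := by omega
    have hj0W : j0 ≤ W + 1 := by
      have := a_le_W ha haW i.succ; omega
    have hBge : (i : ℕ) + 2 ≤ Blt a j0 := by
      have hpt : ∀ k : Fin (m+2), (if 0 ≤ (k : ℕ) ∧ (k : ℕ) < (i : ℕ) + 2 then (1:ℕ) else 0) ≤
          if a k < j0 then 1 else 0 := by
        intro k
        split_ifs with h1 h2
        · rfl
        · exfalso
          apply h2
          have hle : k ≤ i.succ := by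
            rw [Fin.le_def]; simp only [Fin.val_succ]; omega
          have := ha hle
          omega
        · omega
        · rfl
      calc (i : ℕ) + 2 = ∑ k : Fin (m+2), if 0 ≤ (k : ℕ) ∧ (k : ℕ) < (i : ℕ) + 2 then 1 else 0 := by
            rw [count_Ico (m+2) 0 ((i : ℕ) + 2) (by omega)]; omega
        _ ≤ Blt a j0 := Finset.sum_le_sum (fun k _ => hpt k)
    have hS : PS (v (m+1)) j0 ≤ (i : ℕ) := le_trans (PS_mono _ hj0le) s1
    have := (key1 j0 hj0W).2
    omega

lemma fwd_gen (ha : Monotone a) (haW : a (Fin.last (m + 1)) ≤ W)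
    (hg : Gen (m+1) W a h v) :
    Gen m W (fun i : Fin (m+1) => sel W (v (m+1)) (i : ℕ))
      (fun r j => if r ≤ m then h r j else 0)
      (fun r j => if r ≤ m+1 then v r j else 0) := by
  obtain ⟨htop, htot⟩ := top_facts ha haW hg
  refine ⟨?_, ?_, ?_, ?_, ?_, ?_, ?_, ?_, ?_, ?_⟩
  · intro r hr j hj
    dsimp only
    rw [if_pos hr, if_pos hr, if_pos (by omega : r ≤ m+1), if_pos (by omega : r+1 ≤ m+1)]
    exact hg.1 r (by omega) j hj
  · intro r j
    dsimp only
    split_ifs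
    · exact hg.2.1 r j
    · omega
  · intro r hr
    dsimp only
    rw [if_pos hr]
    exact hg.2.2.1 r (by omega)
  · intro r hr
    dsimp only
    rw [if_pos hr]
    exact hg.2.2.2.1 r (by omega)
  · intro j
    dsimp only
    rw [if_pos (by omega : (0:ℕ) ≤ m+1)]
    exact hg.2.2.2.2.1 j
  · intro j
    dsimp only
    rw [if_pos (le_refl (m+1))]
    exact (cnt_sel m W (v (m+1)) htot
      (fun j' hj' => hg.2.2.2.2.2.2.2.2.2 (m+1) j' hj') j).symm
  · intro r j hr
    dsimp only
    rw [if_neg (by omega)]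
  · intro r j hj
    dsimp only
    split_ifs with hr
    · exact hg.2.2.2.2.2.2.2.1 r j hj
    · rfl
  · intro r j hr
    dsimp only
    rw [if_neg (by omega)]
  · intro r j hj
    dsimp only
    split_ifs with hr
    · exact hg.2.2.2.2.2.2.2.2.2 r j hj
    · rfl

lemma bwd_gen (ha : Monotone a) (haW : a (Fin.last (m + 1)) ≤ W)
    {b : Fin (m+1) → ℕ}
    (hip : ∀ i, a i.castSucc ≤ b i ∧ b i ≤ a i.succ)
    (hg : Gen m W b h v) :
    Gen (m+1) W a (fun r j => if r = m+1 then Hrow a b j else h r j)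
      (fun r j => if r = m+1+1 then cnt a j else v r j) := by
  have hbW : ∀ i, b i ≤ W := fun i => le_trans (hip i).2 (a_le_W ha haW i.succ)
  have hH1 : ∀ j, Hrow a b j ≤ 1 := by
    intro j
    have := (interlace_blt hip j).1
    rw [Hrow]
    omega
  have hH0 : Hrow a b 0 = 1 := by
    rw [Hrow, Blt_zero, Blt_zero]
  have hHW : ∀ j, W + 1 ≤ j → Hrow a b j = 0 := by
    intro j hj
    have hbb : Blt b j = m+1 := Blt_all b j (fun k => by have := hbW k; omega)
    have haa : Blt a j = m+2 := Blt_all a j (fun k => by have := a_le_W ha haW k; omega)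
    rw [Hrow, hbb, haa]
    omega
  have hcons : ∀ j ≤ W, Hrow a b j + cnt b j = Hrow a b (j+1) + cnt a j := by
    intro j _
    have e1 := Blt_succ a j
    have e2 := Blt_succ b j
    have i1 := interlace_blt hip j
    have i2 := interlace_blt hip (j+1)
    rw [Hrow, Hrow]
    omega
  refine ⟨?_, ?_, ?_, ?_, ?_, ?_, ?_, ?_, ?_, ?_⟩
  · intro r hr j hj
    dsimp only
    by_cases hrm : r = m+1
    · subst hrm
      rw [if_pos rfl, if_pos rfl, if_neg (by omega), if_pos rfl]
      have := hg.2.2.2.2.2.1 j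
      rw [this]
      exact hcons j hj
    · rw [if_neg hrm, if_neg hrm, if_neg (by omega), if_neg (by omega)]
      exact hg.1 r (by omega) j hj
  · intro r j
    dsimp only
    split_ifs
    · exact hH1 j
    · exact hg.2.1 r j
  · intro r hr
    dsimp only
    by_cases hrm : r = m+1
    · rw [if_pos hrm]; exact hH0
    · rw [if_neg hrm]; exact hg.2.2.1 r (by omega)
  · intro r hr
    dsimp only
    by_cases hrm : r = m+1
    · rw [if_pos hrm]; exact hHW (W+1) le_rfl
    · rw [if_neg hrm]; exact hg.2.2.2.1 r (by omega)
  · intro j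
    dsimp only
    rw [if_neg (by omega)]
    exact hg.2.2.2.2.1 j
  · intro j
    dsimp only
    rw [if_pos rfl]
  · intro r j hr
    dsimp only
    rw [if_neg (by omega)]
    exact hg.2.2.2.2.2.2.1 r j (by omega)
  · intro r j hj
    dsimp only
    split_ifs with hrm
    · exact hHW j (by omega)
    · exact hg.2.2.2.2.2.2.2.1 r j hj
  · intro r j hr
    dsimp only
    rw [if_neg (by omega)]
    exact hg.2.2.2.2.2.2.2.2.1 r j (by omega)
  · intro r j hj
    dsimp only
    split_ifs with hrm
    · exact cnt_zero a j (fun k => by have := a_le_W ha haW k; omega)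
    · exact hg.2.2.2.2.2.2.2.2.2 r j hj

end Step




lemma gen_card_succ (m W : ℕ) (a : Fin (m + 2) → ℕ) (ha : Monotone a)
    (haW : a (Fin.last (m + 1)) ≤ W) :
    Nat.card {c : (ℕ → ℕ → ℕ) × (ℕ → ℕ → ℕ) // Gen (m+1) W a c.1 c.2} =
    ∑ b ∈ Fintype.piFinset (fun i : Fin (m + 1) => Finset.Icc (a i.castSucc) (a i.succ)),
      Nat.card {c : (ℕ → ℕ → ℕ) × (ℕ → ℕ → ℕ) // Gen m W b c.1 c.2} := by
  classical
  set box := Fintype.piFinset (fun i : Fin (m + 1) => Finset.Icc (a i.castSucc) (a i.succ))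
    with hbox
  have E : {c : (ℕ → ℕ → ℕ) × (ℕ → ℕ → ℕ) // Gen (m+1) W a c.1 c.2} ≃
      Σ bb : {x // x ∈ box}, {c : (ℕ → ℕ → ℕ) × (ℕ → ℕ → ℕ) // Gen m W bb.val c.1 c.2} := by
    refine ⟨?_, ?_, ?_, ?_⟩
    · intro c
      exact ⟨⟨(fun i : Fin (m+1) => sel W (c.val.2 (m+1)) (i : ℕ)),
          fwd_box ha haW c.property⟩,
        ⟨((fun r j => if r ≤ m then c.val.1 r j else 0),
          (fun r j => if r ≤ m+1 then c.val.2 r j else 0)),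
          fwd_gen ha haW c.property⟩⟩
    · intro p
      exact ⟨((fun r j => if r = m+1 then Hrow a p.1.val j else p.2.val.1 r j),
          (fun r j => if r = m+1+1 then cnt a j else p.2.val.2 r j)),
        bwd_gen ha haW (fun i => by
          have := (Fintype.mem_piFinset.1 p.1.property) i
          rwa [Finset.mem_Icc] at this) p.2.property⟩
    · intro c
      obtain ⟨⟨h, v⟩, hg⟩ := c
      apply Subtype.ext
      dsimp only
      obtain ⟨htop, htot⟩ := top_facts ha haW hg
      dsimp only at htop htot
      have hcnt : ∀ j, cnt (fun i : Fin (m+1) => sel W (v (m+1)) (i : ℕ)) j = v (m+1) j :=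
        cnt_sel m W (v (m+1)) htot (fun j' hj' => hg.2.2.2.2.2.2.2.2.2 (m+1) j' hj')
      refine Prod.ext ?_ ?_
      · funext r j
        dsimp only
        by_cases hrm : r = m+1
        · subst hrm
          rw [if_pos rfl]
          have hblt : Blt (fun i : Fin (m+1) => sel W (v (m+1)) (i : ℕ)) j =
              PS (v (m+1)) j := by
            rw [← PS_cnt]
            have : cnt (fun i : Fin (m+1) => sel W (v (m+1)) (i : ℕ)) = v (m+1) :=
              funext hcnt
            rw [this]
          rw [Hrow, hblt]
          by_cases hj : j ≤ W + 1
          · have h1 := htop j hj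
            have h2 := hg.2.1 (m+1) j
            omega
          · have hj1 : h (m+1) j = 0 := hg.2.2.2.2.2.2.2.1 (m+1) j (by omega)
            have hPS : PS (v (m+1)) j = PS (v (m+1)) (W+1) :=
              PS_stable (v (m+1)) (W+1) j
                (fun x hx => hg.2.2.2.2.2.2.2.2.2 (m+1) x (by omega)) (by omega)
            have hblta : Blt a j = m+2 := Blt_all a j (fun k => by
              have := a_le_W ha haW k; omega)
            rw [hj1, hblta, hPS, htot]
            omega
        · rw [if_neg hrm]
          by_cases hr : r ≤ m
          · rw [if_pos hr]
          · rw [if_neg hr]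
            exact (hg.2.2.2.2.2.2.1 r j (by omega)).symm
      · funext r j
        dsimp only
        by_cases hrm : r = m+1+1
        · subst hrm
          rw [if_pos rfl]
          exact (hg.2.2.2.2.2.1 j).symm
        · rw [if_neg hrm]
          by_cases hr : r ≤ m+1
          · rw [if_pos hr]
          · rw [if_neg hr]
            exact (hg.2.2.2.2.2.2.2.2.1 r j (by omega)).symm
    · intro p
      obtain ⟨⟨b, hb⟩, ⟨⟨h, v⟩, hg⟩⟩ := p
      have hmono : Monotone b := (box_mono a ha b hb).1
      have hbW : ∀ i, b i ≤ W := fun i =>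
        le_trans ((box_mono a ha b hb).2 i).2 (a_le_W ha haW i.succ)
      have hvm : (fun r j => if r = m+1+1 then cnt a j else v r j) (m+1) = cnt b := by
        funext j
        dsimp only
        rw [if_neg (by omega)]
        exact hg.2.2.2.2.2.1 j
      have hfst : (fun i : Fin (m+1) =>
          sel W ((fun r j => if r = m+1+1 then cnt a j else v r j) (m+1)) (i : ℕ)) = b := by
        funext i
        rw [hvm]
        exact sel_cnt W b hmono hbW i
      subst hfst
      refine congrArg (Sigma.mk _) (Subtype.ext (Prod.ext ?_ ?_))
      · funext r j
        dsimp only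
        by_cases hr : r ≤ m
        · rw [if_pos hr, if_neg (by omega)]
        · rw [if_neg hr]
          exact (hg.2.2.2.2.2.2.1 r j (by omega)).symm
      · funext r j
        dsimp only
        by_cases hr : r ≤ m+1
        · rw [if_pos hr, if_neg (by omega)]
        · rw [if_neg hr]
          exact (hg.2.2.2.2.2.2.2.2.1 r j (by omega)).symm
  rw [Nat.card_congr E]
  letI : ∀ bb : {x // x ∈ box}, Fintype {c : (ℕ → ℕ → ℕ) × (ℕ → ℕ → ℕ) //
      Gen m W bb.val c.1 c.2} := fun bb => Fintype.ofFinite _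
  rw [Nat.card_eq_fintype_card, Fintype.card_sigma]
  rw [← Finset.sum_coe_sort box
    (fun b => Nat.card {c : (ℕ → ℕ → ℕ) × (ℕ → ℕ → ℕ) // Gen m W b c.1 c.2})]
  apply Finset.sum_congr rfl
  intro bb _
  rw [Nat.card_eq_fintype_card]


end TP



/-- A t = 0 touching-path configuration with endpoints `(a_0,…,a_n)` on the grid
`{0,…,a_n} × {−n,…,0}`: edge multiplicities satisfying conservation at every vertex,
horizontal multiplicities at most 1, multiplicity 1 on each incoming west boundary edge,
0 on the east and south boundary edges, and 1 on the outgoing north boundary edge exactly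
at the columns `a_0, …, a_n`. -/
def TouchingConfig (n : ℕ) (a : Fin (n + 1) → ℕ)
    (c : (Fin (n + 1) → Fin (a (Fin.last n) + 2) → ℕ) ×
         (Fin (n + 2) → Fin (a (Fin.last n) + 1) → ℕ)) : Prop :=
  (∀ (r : Fin (n + 1)) (j : Fin (a (Fin.last n) + 1)),
      c.1 r j.castSucc + c.2 r.castSucc j = c.1 r j.succ + c.2 r.succ j) ∧
  (∀ (r : Fin (n + 1)) (j : Fin (a (Fin.last n) + 2)), c.1 r j ≤ 1) ∧
  (∀ r : Fin (n + 1), c.1 r 0 = 1) ∧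
  (∀ r : Fin (n + 1), c.1 r (Fin.last (a (Fin.last n) + 1)) = 0) ∧
  (∀ j : Fin (a (Fin.last n) + 1), c.2 0 j = 0) ∧
  (∀ j : Fin (a (Fin.last n) + 1),
      c.2 (Fin.last (n + 1)) j = if ∃ i, a i = (j : ℕ) then 1 else 0)

namespace TP

lemma gen_card : ∀ (m W : ℕ) (b : Fin (m + 1) → ℕ), Monotone b → b (Fin.last m) ≤ W →
    Nat.card {c : (ℕ → ℕ → ℕ) × (ℕ → ℕ → ℕ) // Gen m W b c.1 c.2} = GT m b := by
  intro m
  induction m with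
  | zero =>
    intro W b _ hbW
    rw [gen_card_zero W b hbW]
    rfl
  | succ m ih =>
    intro W a hmono haW
    rw [gen_card_succ m W a hmono haW, GT]
    apply Finset.sum_congr rfl
    intro b hb
    have hbm := box_mono a hmono b hb
    apply ih W b hbm.1
    calc b (Fin.last m) ≤ a (Fin.last m).succ := (hbm.2 (Fin.last m)).2
      _ ≤ a (Fin.last (m+1)) := hmono (Fin.le_last _)
      _ ≤ W := haW

end TP

lemma touching_card_eq_gen (n : ℕ) (a : Fin (n + 1) → ℕ) (hsm : StrictMono a) :
    Nat.card {c // TouchingConfig n a c} =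
    Nat.card {c : (ℕ → ℕ → ℕ) × (ℕ → ℕ → ℕ) //
      TP.Gen n (a (Fin.last n)) a c.1 c.2} := by
  apply Nat.card_congr
  have hind : ∀ j : ℕ, TP.cnt a j = if ∃ i, a i = j then 1 else 0 :=
    TP.cnt_injective a hsm.injective
  have haW : ∀ i, a i ≤ a (Fin.last n) := fun i => hsm.monotone (Fin.le_last i)
  refine ⟨?_, ?_, ?_, ?_⟩
  · intro c
    refine ⟨(fun r j => if hr : r ≤ n then
        (if hj : j ≤ a (Fin.last n) + 1 then c.val.1 ⟨r, by omega⟩ ⟨j, by omega⟩ else 0) else 0,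
      fun r j => if hr : r ≤ n + 1 then
        (if hj : j ≤ a (Fin.last n) then c.val.2 ⟨r, by omega⟩ ⟨j, by omega⟩ else 0) else 0),
      ?_, ?_, ?_, ?_, ?_, ?_, ?_, ?_, ?_, ?_⟩
    · intro r hr j hj
      dsimp only
      split_ifs <;> try omega
      have := c.property.1 ⟨r, by omega⟩ ⟨j, by omega⟩
      simpa [Fin.castSucc_mk, Fin.succ_mk] using this
    · intro r j
      dsimp only
      split_ifs
      · exact c.property.2.1 _ _
      · omega
      · omega
    · intro r hr
      dsimp only
      rw [dif_pos hr, dif_pos (by omega : (0:ℕ) ≤ a (Fin.last n) + 1)]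
      exact c.property.2.2.1 ⟨r, by omega⟩
    · intro r hr
      dsimp only
      rw [dif_pos hr, dif_pos (le_refl (a (Fin.last n) + 1))]
      exact c.property.2.2.2.1 ⟨r, by omega⟩
    · intro j
      dsimp only
      rw [dif_pos (by omega : (0:ℕ) ≤ n + 1)]
      split_ifs with hj
      · exact c.property.2.2.2.2.1 ⟨j, by omega⟩
      · rfl
    · intro j
      dsimp only
      rw [dif_pos (le_refl (n+1))]
      split_ifs with hj
      · rw [hind j]
        exact c.property.2.2.2.2.2 ⟨j, by omega⟩
      · rw [TP.cnt_zero a j (fun k => by have := haW k; omega)]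
    · intro r j hr
      dsimp only
      rw [dif_neg (by omega)]
    · intro r j hj
      dsimp only
      split_ifs with h1 h2
      · omega
      · rfl
      · rfl
    · intro r j hr
      dsimp only
      rw [dif_neg (by omega)]
    · intro r j hj
      dsimp only
      split_ifs with h1 h2
      · omega
      · rfl
      · rfl
  · intro c
    refine ⟨(fun (r : Fin (n+1)) (j : Fin (a (Fin.last n) + 2)) => c.val.1 (r : ℕ) (j : ℕ),
      fun (r : Fin (n+2)) (j : Fin (a (Fin.last n) + 1)) => c.val.2 (r : ℕ) (j : ℕ)),
      ?_, ?_, ?_, ?_, ?_, ?_⟩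
    · intro r j
      exact c.property.1 (r : ℕ) (by omega) (j : ℕ) (by omega)
    · intro r j
      exact c.property.2.1 (r : ℕ) (j : ℕ)
    · intro r
      exact c.property.2.2.1 (r : ℕ) (by omega)
    · intro r
      exact c.property.2.2.2.1 (r : ℕ) (by omega)
    · intro j
      exact c.property.2.2.2.2.1 (j : ℕ)
    · intro j
      rw [← hind (j : ℕ)]
      exact c.property.2.2.2.2.2.1 (j : ℕ)
  · intro c
    apply Subtype.ext
    refine Prod.ext ?_ ?_
    · funext r j
      dsimp only
      rw [dif_pos (by omega : (r : ℕ) ≤ n), dif_pos (by omega : (j : ℕ) ≤ a (Fin.last n) + 1)]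
    · funext r j
      dsimp only
      rw [dif_pos (by omega : (r : ℕ) ≤ n + 1), dif_pos (by omega : (j : ℕ) ≤ a (Fin.last n))]
  · intro c
    apply Subtype.ext
    refine Prod.ext ?_ ?_
    · funext r j
      dsimp only
      by_cases hr : r ≤ n
      · rw [dif_pos hr]
        by_cases hj : j ≤ a (Fin.last n) + 1
        · rw [dif_pos hj]
        · rw [dif_neg hj]
          exact (c.property.2.2.2.2.2.2.2.1 r j (by omega)).symm
      · rw [dif_neg hr]
        exact (c.property.2.2.2.2.2.2.1 r j (by omega)).symm
    · funext r j
      dsimp only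
      by_cases hr : r ≤ n + 1
      · rw [dif_pos hr]
        by_cases hj : j ≤ a (Fin.last n)
        · rw [dif_pos hj]
        · rw [dif_neg hj]
          exact (c.property.2.2.2.2.2.2.2.2.2 r j (by omega)).symm
      · rw [dif_neg hr]
        exact (c.property.2.2.2.2.2.2.2.2.1 r j (by omega)).symm

/-- The number of t = 0 touching-path configurations with endpoints `(a_0,…,a_n)` equals
the ratio of Vandermonde determinants
`Δ(a_0, a_1+1, …, a_n+n) / Δ(0, 1, …, n) = ∏_{i<j} ((a_j+j)−(a_i+i))/(j−i)`. -/
theorem touching_card_eq_vandermonde_ratio (n : ℕ) (a : Fin (n + 1) → ℕ)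
    (ha0 : a 0 = 0) (hmono : StrictMono a) :
    (Nat.card {c // TouchingConfig n a c} : ℚ) =
      (∏ p ∈ Finset.univ.filter (fun p : Fin (n + 1) × Fin (n + 1) => p.1 < p.2),
        (((a p.2 : ℚ) + (p.2 : ℕ)) - ((a p.1 : ℚ) + (p.1 : ℕ)))) /
      (∏ p ∈ Finset.univ.filter (fun p : Fin (n + 1) × Fin (n + 1) => p.1 < p.2),
        (((p.2 : ℕ) : ℚ) - ((p.1 : ℕ) : ℚ))) := by
  rw [touching_card_eq_gen n a hmono,
    TP.gen_card n (a (Fin.last n)) a hmono.monotone le_rfl,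
    TP.GT_eq n a hmono.monotone]
  rfl
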